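/- Let f : ℝ → ℝ be six times continuously differentiable and x ∈ ℝ, and let α, a, b be real numbers satisfying the order-2 condition 1 + 2α = a + b. Define for h ≠ 0 the truncation error E(h) = α(f'(x−h) + f'(x+h)) + f'(x) − a·(f(x+h) − f(x−h))/(2h) − b·(f(x+2h) − f(x−2h))/(4h). Then E(h) = O(h²) as h → 0. -/

import Mathlib

private lemma comp_hasDerivAt (f : ℝ → ℝ) (hf : Differentiable ℝ f) (x c t : ℝ) :
    HasDerivAt (fun h : ℝ => f (x + c * h)) (c * deriv f (x + c * t)) t := by
  have h1 : HasDerivAt (fun h : ℝ => x + c * h) c t := by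
    simpa using ((hasDerivAt_id t).const_mul c).const_add x
  have h2 := (hf (x + c * t)).hasDerivAt
  exact (h2.comp t h1).congr_deriv (mul_comm _ _)

theorem compact_first_derivative_second_order
    (f : ℝ → ℝ) (hf : ContDiff ℝ 6 f) (x : ℝ)
    (α a b : ℝ) (hcond : 1 + 2 * α = a + b)
    (E : ℝ → ℝ)
    (hE : ∀ h : ℝ, h ≠ 0 → E h =
      α * (deriv f (x - h) + deriv f (x + h)) + deriv f x
        - a * (f (x + h) - f (x - h)) / (2 * h)
        - b * (f (x + 2 * h) - f (x - 2 * h)) / (4 * h)) :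
    ∃ C > 0, ∃ h₀ > 0, ∀ h : ℝ, h ≠ 0 → |h| ≤ h₀ → |E h| ≤ C * h ^ 2 := by
  set f1 := deriv f with hf1
  set f2 := deriv f1 with hf2
  set f3 := deriv f2 with hf3
  set f4 := deriv f3 with hf4
  have c5 : ContDiff ℝ 5 f1 := by
    have h6 : ContDiff ℝ ((5:ℕ) + 1) f := by exact_mod_cast hf
    exact (contDiff_succ_iff_deriv.mp h6).2.2
  have c4 : ContDiff ℝ 4 f2 := by
    have h5 : ContDiff ℝ ((4:ℕ) + 1) f1 := by exact_mod_cast c5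
    exact (contDiff_succ_iff_deriv.mp h5).2.2
  have c3 : ContDiff ℝ 3 f3 := by
    have h4 : ContDiff ℝ ((3:ℕ) + 1) f2 := by exact_mod_cast c4
    exact (contDiff_succ_iff_deriv.mp h4).2.2
  have c2 : ContDiff ℝ 2 f4 := by
    have h3 : ContDiff ℝ ((2:ℕ) + 1) f3 := by exact_mod_cast c3
    exact (contDiff_succ_iff_deriv.mp h3).2.2
  have df : Differentiable ℝ f := hf.differentiable (by norm_num)
  have df1 : Differentiable ℝ f1 := c5.differentiable (by norm_num)
  have df2 : Differentiable ℝ f2 := c4.differentiable (by norm_num)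
  have df3 : Differentiable ℝ f3 := c3.differentiable (by norm_num)
  have cf3 : Continuous f3 := df3.continuous
  have cf4 : Continuous f4 := c2.continuous
  -- the rescaled truncation error `G h = 4 h · E h` and its successive derivatives
  set G : ℝ → ℝ := fun h =>
    4*α*(h * f1 (x + (-1)*h)) + 4*α*(h * f1 (x + 1*h)) + 4*(h * f1 x)
      - 2*a * f (x + 1*h) + 2*a * f (x + (-1)*h)
      - b * f (x + 2*h) + b * f (x + (-2)*h) with hG
  set g1 : ℝ → ℝ := fun h =>
    4*α*(f1 (x+(-1)*h) - h * f2 (x+(-1)*h)) + 4*α*(f1 (x+1*h) + h * f2 (x+1*h)) + 4*f1 x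
      - 2*a*f1 (x+1*h) - 2*a*f1 (x+(-1)*h) - 2*b*f1 (x+2*h) - 2*b*f1 (x+(-2)*h) with hg1
  set g2 : ℝ → ℝ := fun h =>
    4*α*(-2*f2 (x+(-1)*h) + h * f3 (x+(-1)*h)) + 4*α*(2*f2 (x+1*h) + h * f3 (x+1*h))
      - 2*a*f2 (x+1*h) + 2*a*f2 (x+(-1)*h) - 4*b*f2 (x+2*h) + 4*b*f2 (x+(-2)*h) with hg2
  set g3 : ℝ → ℝ := fun h =>
    4*α*(3*f3 (x+(-1)*h) - h * f4 (x+(-1)*h)) + 4*α*(3*f3 (x+1*h) + h * f4 (x+1*h))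
      - 2*a*f3 (x+1*h) - 2*a*f3 (x+(-1)*h) - 8*b*f3 (x+2*h) - 8*b*f3 (x+(-2)*h) with hg3
  have hGd : ∀ t : ℝ, HasDerivAt G (g1 t) t := by
    intro t
    have hA : HasDerivAt (fun h : ℝ => h * f1 (x + (-1)*h))
        (1 * f1 (x + (-1)*t) + t * ((-1) * f2 (x + (-1)*t))) t :=
      (hasDerivAt_id t).mul (comp_hasDerivAt f1 df1 x (-1) t)
    have hB : HasDerivAt (fun h : ℝ => h * f1 (x + 1*h))
        (1 * f1 (x + 1*t) + t * (1 * f2 (x + 1*t))) t :=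
      (hasDerivAt_id t).mul (comp_hasDerivAt f1 df1 x 1 t)
    have hC : HasDerivAt (fun h : ℝ => h * f1 x) (f1 x) t := by
      simpa using (hasDerivAt_id t).mul_const (f1 x)
    have H := ((((((hA.const_mul (4*α)).add (hB.const_mul (4*α))).add
        (hC.const_mul 4)).sub ((comp_hasDerivAt f df x 1 t).const_mul (2*a))).add
        ((comp_hasDerivAt f df x (-1) t).const_mul (2*a))).sub
        ((comp_hasDerivAt f df x 2 t).const_mul b)).add
        ((comp_hasDerivAt f df x (-2) t).const_mul b)
    refine H.congr_deriv ?_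
    simp only [hg1]; ring
  have hg1d : ∀ t : ℝ, HasDerivAt g1 (g2 t) t := by
    intro t
    have hA : HasDerivAt (fun h : ℝ => f1 (x+(-1)*h) - h * f2 (x+(-1)*h))
        ((-1) * f2 (x+(-1)*t) - (1 * f2 (x+(-1)*t) + t * ((-1) * f3 (x+(-1)*t)))) t :=
      (comp_hasDerivAt f1 df1 x (-1) t).sub
        ((hasDerivAt_id t).mul (comp_hasDerivAt f2 df2 x (-1) t))
    have hB : HasDerivAt (fun h : ℝ => f1 (x+1*h) + h * f2 (x+1*h))
        (1 * f2 (x+1*t) + (1 * f2 (x+1*t) + t * (1 * f3 (x+1*t)))) t :=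
      (comp_hasDerivAt f1 df1 x 1 t).add
        ((hasDerivAt_id t).mul (comp_hasDerivAt f2 df2 x 1 t))
    have H := (((((((hA.const_mul (4*α)).add (hB.const_mul (4*α))).add
        (hasDerivAt_const t (4 * f1 x))).sub
        ((comp_hasDerivAt f1 df1 x 1 t).const_mul (2*a))).sub
        ((comp_hasDerivAt f1 df1 x (-1) t).const_mul (2*a))).sub
        ((comp_hasDerivAt f1 df1 x 2 t).const_mul (2*b))).sub
        ((comp_hasDerivAt f1 df1 x (-2) t).const_mul (2*b)))
    refine H.congr_deriv ?_
    simp only [hg2]; ring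
  have hg2d : ∀ t : ℝ, HasDerivAt g2 (g3 t) t := by
    intro t
    have hA : HasDerivAt (fun h : ℝ => -2*f2 (x+(-1)*h) + h * f3 (x+(-1)*h))
        (-2*((-1) * f3 (x+(-1)*t)) + (1 * f3 (x+(-1)*t) + t * ((-1) * f4 (x+(-1)*t)))) t :=
      ((comp_hasDerivAt f2 df2 x (-1) t).const_mul (-2)).add
        ((hasDerivAt_id t).mul (comp_hasDerivAt f3 df3 x (-1) t))
    have hB : HasDerivAt (fun h : ℝ => 2*f2 (x+1*h) + h * f3 (x+1*h))
        (2*(1 * f3 (x+1*t)) + (1 * f3 (x+1*t) + t * (1 * f4 (x+1*t)))) t :=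
      ((comp_hasDerivAt f2 df2 x 1 t).const_mul 2).add
        ((hasDerivAt_id t).mul (comp_hasDerivAt f3 df3 x 1 t))
    have H := ((((((hA.const_mul (4*α)).add (hB.const_mul (4*α))).sub
        ((comp_hasDerivAt f2 df2 x 1 t).const_mul (2*a))).add
        ((comp_hasDerivAt f2 df2 x (-1) t).const_mul (2*a))).sub
        ((comp_hasDerivAt f2 df2 x 2 t).const_mul (4*b))).add
        ((comp_hasDerivAt f2 df2 x (-2) t).const_mul (4*b)))
    refine H.congr_deriv ?_
    simp only [hg3]; ring
  -- values at 0
  have hG0 : G 0 = 0 := by simp [hG]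
  have hg10 : g1 0 = 0 := by
    simp only [hg1, mul_zero, zero_mul, add_zero, sub_zero, neg_zero]
    linear_combination (4 * f1 x) * hcond
  have hg20 : g2 0 = 0 := by
    simp only [hg2, mul_zero, zero_mul, add_zero, sub_zero, neg_zero]
    ring
  have hg3c : Continuous g3 := by
    rw [hg3]; fun_prop
  -- bound `g3` on `[-1, 1]`
  obtain ⟨M, hM⟩ := (isCompact_Icc : IsCompact (Set.Icc (-1:ℝ) 1)).exists_bound_of_continuousOn
    hg3c.continuousOn
  set K := max M 1 with hK
  have hK0 : (0:ℝ) < K := lt_of_lt_of_le one_pos (le_max_right _ _)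
  have hKb : ∀ s ∈ Set.Icc (-1:ℝ) 1, ‖g3 s‖ ≤ K := fun s hs =>
    le_trans (hM s hs) (le_max_left _ _)
  have hsub : ∀ t : ℝ, |t| ≤ 1 → Set.Icc (-(|t|)) (|t|) ⊆ Set.Icc (-1:ℝ) 1 :=
    fun t ht => Set.Icc_subset_Icc (by linarith) ht
  have hmem0 : ∀ t : ℝ, (0:ℝ) ∈ Set.Icc (-(|t|)) (|t|) := fun t =>
    ⟨by simpa using neg_nonpos_of_nonneg (abs_nonneg t), abs_nonneg t⟩
  have hmemt : ∀ t : ℝ, t ∈ Set.Icc (-(|t|)) (|t|) := fun t => ⟨neg_abs_le t, le_abs_self t⟩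
  -- chain of mean value estimates
  have key2 : ∀ t : ℝ, |t| ≤ 1 → |g2 t| ≤ K * |t| := by
    intro t ht
    have := Convex.norm_image_sub_le_of_norm_hasDerivWithin_le
      (f := g2) (f' := g3) (s := Set.Icc (-(|t|)) (|t|))
      (fun y _ => (hg2d y).hasDerivWithinAt)
      (fun y hy => hKb y (hsub t ht hy)) (convex_Icc _ _) (hmem0 t) (hmemt t)
    simpa [hg20, Real.norm_eq_abs] using this
  have key1 : ∀ t : ℝ, |t| ≤ 1 → |g1 t| ≤ K * |t| * |t| := by
    intro t ht
    have hb : ∀ y ∈ Set.Icc (-(|t|)) (|t|), ‖g2 y‖ ≤ K * |t| := by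
      intro y hy
      have hy1 : |y| ≤ |t| := abs_le.mpr ⟨hy.1, hy.2⟩
      calc ‖g2 y‖ = |g2 y| := Real.norm_eq_abs _
        _ ≤ K * |y| := key2 y (le_trans hy1 ht)
        _ ≤ K * |t| := mul_le_mul_of_nonneg_left hy1 hK0.le
    have := Convex.norm_image_sub_le_of_norm_hasDerivWithin_le
      (fun y _ => (hg1d y).hasDerivWithinAt) hb (convex_Icc _ _) (hmem0 t) (hmemt t)
    calc |g1 t| = ‖g1 t - g1 0‖ := by rw [hg10]; simp [Real.norm_eq_abs]
      _ ≤ K * |t| * ‖t - 0‖ := this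
      _ = K * |t| * |t| := by simp [Real.norm_eq_abs]
  have keyG : ∀ t : ℝ, |t| ≤ 1 → |G t| ≤ K * |t| * |t| * |t| := by
    intro t ht
    have hb : ∀ y ∈ Set.Icc (-(|t|)) (|t|), ‖g1 y‖ ≤ K * |t| * |t| := by
      intro y hy
      have hy1 : |y| ≤ |t| := abs_le.mpr ⟨hy.1, hy.2⟩
      have h1 : K * |y| * |y| ≤ K * |t| * |t| :=
        mul_le_mul (mul_le_mul_of_nonneg_left hy1 hK0.le) hy1 (abs_nonneg y)
          (mul_nonneg hK0.le (abs_nonneg t))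
      calc ‖g1 y‖ = |g1 y| := Real.norm_eq_abs _
        _ ≤ K * |y| * |y| := key1 y (le_trans hy1 ht)
        _ ≤ K * |t| * |t| := h1
    have := Convex.norm_image_sub_le_of_norm_hasDerivWithin_le
      (fun y _ => (hGd y).hasDerivWithinAt) hb (convex_Icc _ _) (hmem0 t) (hmemt t)
    calc |G t| = ‖G t - G 0‖ := by rw [hG0]; simp [Real.norm_eq_abs]
      _ ≤ K * |t| * |t| * ‖t - 0‖ := this
      _ = K * |t| * |t| * |t| := by simp [Real.norm_eq_abs]
  refine ⟨K, hK0, 1, one_pos, ?_⟩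
  intro h hne hh1
  have hEeq : E h = G h / (4*h) := by
    rw [hE h hne]
    simp only [hG]
    rw [show x + (-1)*h = x - h by ring, show x + (1:ℝ)*h = x + h by ring,
      show x + (-2)*h = x - 2*h by ring]
    field_simp
    ring
  have hGb : |G h| ≤ K * |h| * |h| * |h| := keyG h hh1
  have habs : (0:ℝ) < |h| := abs_pos.mpr hne
  rw [hEeq, abs_div]
  have h4 : |4*h| = 4 * |h| := by rw [abs_mul]; norm_num
  rw [h4, div_le_iff₀ (by positivity)]
  have hsq : |h| * |h| = h^2 := by rw [← sq_abs h]; ring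
  have e1 : K * |h| * |h| * |h| = K * h^2 * |h| := by rw [← hsq]; ring
  have e2 : K * h^2 * |h| ≤ K * h^2 * (4*|h|) := by
    have h0 : 0 ≤ K * h^2 * |h| := by positivity
    nlinarith
  linarith [hGb, e1 ▸ hGb]
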